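/- Assume the smooth setting with L > 0 and M_g > 0. Run AdLagEx with the adaptive step sizes η_t := c₁L + c₂L_g·max_{0≤i≤t}‖λ^i‖, γ_t := η₀/η_t, θ_t := γ_{t−1}/γ_t, τ_t := βη_t, where c₁, c₂ > 0 satisfy c₁/3 ≥ c₁/c₂ + 1 and β := 12M_g²/(c₁²L²). Then for every T ≥ 1: (i) ‖λ^{t+1}‖ ≤ B := √(2/β)·‖x⁰−x*‖ + (√2+1)‖λ*‖ for all t ≥ 0; (ii) Γ_T·⟨F(x), x̄^T−x⟩ ≤ (c₁L/2)‖x−x⁰‖² for every x ∈ X̃; (iii) Γ_T·‖[g(x̄^T)]_+‖ ≤ (c₁L/2)‖x*−x⁰‖² + (βc₁L/2)(‖λ*‖+1)²; and (iv) Γ_T ≥ c₁L·T/(c₁L + c₂L_gB). -/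

import Mathlib

open scoped InnerProductSpace BigOperators

noncomputable section

/-- ℝ^k with the Euclidean norm. -/
abbrev Euc (k : ℕ) := EuclideanSpace ℝ (Fin k)

/-- `∇g(x) μ`, where `G j` is the j-th column of `∇g(x)`. -/
def gradMul {m : ℕ} {E : Type*} [NormedAddCommGroup E] [InnerProductSpace ℝ E]
    (G : Fin m → E) (μ : Euc m) : E :=
  ∑ j, μ j • G j

/-- componentwise positive part `[v]₊`. -/
def posPart {m : ℕ} (v : Euc m) : Euc m :=
  (EuclideanSpace.equiv (Fin m) ℝ).symm fun j => max (v j) 0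

lemma euc_inner {m : ℕ} (a b : Euc m) : ⟪a, b⟫_ℝ = ∑ j, a j * b j := by
  simp [PiLp.inner_apply, RCLike.inner_apply, mul_comm]

lemma posPart_apply {m : ℕ} (v : Euc m) (j : Fin m) : posPart v j = max (v j) 0 := rfl

lemma inner_posPart_self {m : ℕ} (v : Euc m) : ⟪posPart v, v⟫_ℝ = ‖posPart v‖ ^ 2 := by
  rw [euc_inner, ← real_inner_self_eq_norm_sq, euc_inner]
  apply Finset.sum_congr rfl
  intro j _
  simp only [posPart_apply]
  rcases le_total (v j) 0 with h | h
  · simp [max_eq_right h]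
  · simp [max_eq_left h]

lemma gradMul_inner {m nn : ℕ} (G : Fin m → Euc nn) (μ : Euc m) (v : Euc nn) :
    ⟪gradMul G μ, v⟫_ℝ = ∑ j, μ j * ⟪G j, v⟫_ℝ := by
  simp [gradMul, sum_inner, real_inner_smul_left, Finset.mul_sum, mul_assoc]

lemma gradMul_sub {m nn : ℕ} (G : Fin m → Euc nn) (μ ν : Euc m) :
    gradMul G μ - gradMul G ν = gradMul G (μ - ν) := by
  simp only [gradMul, ← Finset.sum_sub_distrib, ← sub_smul]
  apply Finset.sum_congr rfl
  intro j _
  rfl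

lemma orthant_convex (m : ℕ) :
    Convex ℝ {v : Euc m | ∀ j, 0 ≤ v j} := by
  intro u hu v hv a b ha hb _ j
  have h1 := hu j; have h2 := hv j
  have h : (a • u + b • v) j = a * u j + b * v j := rfl
  rw [h]; positivity

lemma sqrt_add_le' {u v : ℝ} (hu : 0 ≤ u) (hv : 0 ≤ v) :
    Real.sqrt (u + v) ≤ Real.sqrt u + Real.sqrt v := by
  have h : u + v ≤ (Real.sqrt u + Real.sqrt v) ^ 2 := by
    have h1 := Real.sq_sqrt hu
    have h2 := Real.sq_sqrt hv
    nlinarith [Real.sqrt_nonneg u, Real.sqrt_nonneg v]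
  calc Real.sqrt (u + v) ≤ Real.sqrt ((Real.sqrt u + Real.sqrt v) ^ 2) :=
        Real.sqrt_le_sqrt h
    _ = Real.sqrt u + Real.sqrt v := by
        rw [Real.sqrt_sq (by positivity)]

lemma young_aux {Mg b' H a b : ℝ} (hb' : 0 < b') (hH : 0 < H)
    (hMg : Mg ^ 2 = b' * H ^ 2 / 12) : Mg * a * b ≤ b' * H / 4 * a ^ 2 + H / 12 * b ^ 2 := by
  nlinarith [sq_nonneg (b' * H * a - 2 * Mg * b), mul_pos hb' hH, sq_nonneg a, sq_nonneg b,
    mul_pos (mul_pos hb' hH) hH]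

lemma young_aux3 {H a b : ℝ} (hH : 0 < H) : H / 3 * (a * b) ≤ H / 6 * a ^ 2 + H / 6 * b ^ 2 := by
  nlinarith [mul_nonneg hH.le (sq_nonneg (a - b))]

/-- three-point inequality for the prox step -/
lemma prox_three_point {E : Type*} [NormedAddCommGroup E] [InnerProductSpace ℝ E]
    {S : Set E} (hS : Convex ℝ S) {q x₀ p : E} {e : ℝ} (he : 0 < e)
    (hp : p ∈ S)
    (hmin : ∀ y ∈ S, ⟪q, p⟫_ℝ + e / 2 * ‖p - x₀‖ ^ 2 ≤ ⟪q, y⟫_ℝ + e / 2 * ‖y - x₀‖ ^ 2) :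
    ∀ y ∈ S, ⟪q, p - y⟫_ℝ ≤ e / 2 * (‖y - x₀‖ ^ 2 - ‖y - p‖ ^ 2 - ‖p - x₀‖ ^ 2) := by
  intro y hy
  have hVI : 0 ≤ ⟪q, y - p⟫_ℝ + e * ⟪p - x₀, y - p⟫_ℝ := by
    by_contra hcon
    push_neg at hcon
    set C := ⟪q, y - p⟫_ℝ + e * ⟪p - x₀, y - p⟫_ℝ with hC
    set D := e / 2 * ‖y - p‖ ^ 2 with hD
    have hD0 : 0 ≤ D := by positivity
    set α := min 1 (-C / (D + 1)) with hα
    have hCpos : 0 < -C := by linarith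
    have hα0 : 0 < α := lt_min one_pos (by positivity)
    have hα1 : α ≤ 1 := min_le_left _ _
    have hyα : p + α • (y - p) ∈ S := by
      have h := hS hp hy (a := 1 - α) (b := α) (by linarith) (le_of_lt hα0) (by ring)
      convert h using 1
      module
    have hkey := hmin _ hyα
    have hexp : ⟪q, p + α • (y - p)⟫_ℝ = ⟪q, p⟫_ℝ + α * ⟪q, y - p⟫_ℝ := by
      rw [inner_add_right, real_inner_smul_right]
    have hexp2 : ‖p + α • (y - p) - x₀‖ ^ 2
        = ‖p - x₀‖ ^ 2 + 2 * α * ⟪p - x₀, y - p⟫_ℝ + α ^ 2 * ‖y - p‖ ^ 2 := by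
      have h0 : p + α • (y - p) - x₀ = (p - x₀) + α • (y - p) := by abel
      rw [h0, ← real_inner_self_eq_norm_sq, ← real_inner_self_eq_norm_sq,
        ← real_inner_self_eq_norm_sq]
      rw [inner_add_add_self, real_inner_smul_left, real_inner_smul_right,
        real_inner_smul_left, real_inner_smul_right, real_inner_comm (y - p) (p - x₀)]
      ring
    rw [hexp, hexp2] at hkey
    have h2 : 0 ≤ α * (C + α * D) := by
      simp only [hC, hD]; nlinarith [hkey]
    have h3 : 0 ≤ C + α * D :=
      nonneg_of_mul_nonneg_right (by linarith [mul_nonneg (le_of_lt hα0) (le_of_lt hα0)]) hα0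
    have h4 : α * D ≤ -C / (D + 1) * D :=
      mul_le_mul_of_nonneg_right (min_le_right _ _) hD0
    have h5 : -C / (D + 1) * D < -C := by
      rw [div_mul_eq_mul_div, div_lt_iff₀ (by linarith)]
      nlinarith
    linarith
  have hcos : ⟪p - x₀, y - p⟫_ℝ = (‖y - x₀‖ ^ 2 - ‖y - p‖ ^ 2 - ‖p - x₀‖ ^ 2) / 2 := by
    have h : y - x₀ = (y - p) + (p - x₀) := by abel
    rw [h, ← real_inner_self_eq_norm_sq, ← real_inner_self_eq_norm_sq,
      ← real_inner_self_eq_norm_sq, inner_add_add_self,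
      real_inner_comm (y - p) (p - x₀)]
    ring
  have hswap : ⟪q, p - y⟫_ℝ = -⟪q, y - p⟫_ℝ := by
    rw [← inner_neg_right]; congr 1; abel
  rw [hswap]
  rw [hcos] at hVI
  linarith

set_option maxHeartbeats 4000000 in
/-- **Theorem 5.2 of the paper.** Convergence of the Adaptive Lagrangian
Extrapolation (AdLagEx) method with the adaptive step-size policy, for smooth
deterministic FCVI problems. -/
theorem adlagex_convergence
    {n m : ℕ}
    (X : Set (Euc n)) (hXne : X.Nonempty) (hXcomp : IsCompact X) (hXconv : Convex ℝ X)
    -- smooth monotone operator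
    (F : Euc n → Euc n) (L : ℝ) (hLpos : 0 < L)
    (hFmono : ∀ x₁ ∈ X, ∀ x₂ ∈ X, 0 ≤ ⟪F x₁ - F x₂, x₁ - x₂⟫_ℝ)
    (hFlip : ∀ x₁ ∈ X, ∀ x₂ ∈ X, ‖F x₁ - F x₂‖ ≤ L * ‖x₁ - x₂‖)
    -- smooth convex constraints
    (g : Euc n → Euc m) (Gg : Euc n → Fin m → Euc n)
    (Mg Lg : ℝ) (hMgpos : 0 < Mg) (hLg : 0 ≤ Lg)
    (hgconv : ∀ x ∈ X, ∀ y ∈ X, ∀ j, g x j + ⟪Gg x j, y - x⟫_ℝ ≤ g y j)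
    (hglip : ∀ x₁ ∈ X, ∀ x₂ ∈ X, ‖g x₁ - g x₂‖ ≤ Mg * ‖x₁ - x₂‖)
    (hGgbd : ∀ x ∈ X, ∀ μ : Euc m, ‖gradMul (Gg x) μ‖ ≤ Mg * ‖μ‖)
    (hGglip : ∀ x₁ ∈ X, ∀ x₂ ∈ X, ∀ μ : Euc m,
      ‖gradMul (Gg x₁) μ - gradMul (Gg x₂) μ‖ ≤ Lg * ‖μ‖ * ‖x₁ - x₂‖)
    (hXtne : ∃ x ∈ X, ∀ j, g x j ≤ 0)
    -- KKT pair
    (xstar : Euc n) (lamstar : Euc m) (hxstar : xstar ∈ X) (hlamstar : ∀ j, 0 ≤ lamstar j)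
    (hsaddle₁ : ∀ x ∈ X,
      ⟪F xstar, xstar⟫_ℝ + ⟪lamstar, g xstar⟫_ℝ ≤ ⟪F xstar, x⟫_ℝ + ⟪lamstar, g x⟫_ℝ)
    (hsaddle₂ : ∀ lam' : Euc m, (∀ j, 0 ≤ lam' j) →
      ⟪lam', g xstar⟫_ℝ ≤ ⟪lamstar, g xstar⟫_ℝ)
    -- adaptive step-size policy
    (c₁ c₂ : ℝ) (hc₁ : 0 < c₁) (hc₂ : 0 < c₂) (hc : c₁ / c₂ + 1 ≤ c₁ / 3)
    (γ η τ θ : ℕ → ℝ)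
    (x xm : ℕ → Euc n) (lam lamm : ℕ → Euc m)
    (hηt : ∀ t, η t = c₁ * L
      + c₂ * Lg * (Finset.range (t + 1)).sup' Finset.nonempty_range_add_one fun i => ‖lam i‖)
    (hγt : ∀ t, γ t = η 0 / η t)
    (hθ0 : θ 0 = 1) (hθt : ∀ t, θ (t + 1) = γ t / γ (t + 1))
    (hτt : ∀ t, τ t = 12 * Mg ^ 2 / (c₁ ^ 2 * L ^ 2) * η t)
    -- iterates
    (hx0 : x 0 ∈ X) (hxm0 : xm 0 = x 0) (hxm : ∀ t, xm (t + 1) = x t)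
    (hlam0 : lam 0 = 0) (hlamm0 : lamm 0 = lam 0) (hlamm : ∀ t, lamm (t + 1) = lam t)
    -- λ update
    (hlamPos : ∀ t, ∀ j, 0 ≤ lam (t + 1) j)
    (hlamMin : ∀ t, ∀ lam' : Euc m, (∀ j, 0 ≤ lam' j) →
      ⟪-((1 + θ t) • g (x t) - θ t • g (xm t)), lam (t + 1)⟫_ℝ
          + τ t / 2 * ‖lam (t + 1) - lam t‖ ^ 2
        ≤ ⟪-((1 + θ t) • g (x t) - θ t • g (xm t)), lam'⟫_ℝ
          + τ t / 2 * ‖lam' - lam t‖ ^ 2)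
    -- x update
    (hxS : ∀ t, x (t + 1) ∈ X)
    (hxMin : ∀ t, ∀ y ∈ X,
      ⟪(1 + θ t) • (F (x t) + gradMul (Gg (x t)) (lam t))
          - θ t • (F (xm t) + gradMul (Gg (xm t)) (lamm t)), x (t + 1)⟫_ℝ
          + η t / 2 * ‖x (t + 1) - x t‖ ^ 2
        ≤ ⟪(1 + θ t) • (F (x t) + gradMul (Gg (x t)) (lam t))
          - θ t • (F (xm t) + gradMul (Gg (xm t)) (lamm t)), y⟫_ℝ
          + η t / 2 * ‖y - x t‖ ^ 2) :
    (∀ t : ℕ, ‖lam (t + 1)‖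
      ≤ Real.sqrt (2 / (12 * Mg ^ 2 / (c₁ ^ 2 * L ^ 2))) * ‖x 0 - xstar‖
        + (Real.sqrt 2 + 1) * ‖lamstar‖)
    ∧ (∀ T : ℕ, 1 ≤ T → ∀ z ∈ X, (∀ j, g z j ≤ 0) →
      (∑ t ∈ Finset.range T, γ t) *
        ⟪F z, (∑ t ∈ Finset.range T, γ t)⁻¹ • (∑ t ∈ Finset.range T, γ t • x (t + 1))
          - z⟫_ℝ
        ≤ c₁ * L / 2 * ‖z - x 0‖ ^ 2)
    ∧ (∀ T : ℕ, 1 ≤ T →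
      (∑ t ∈ Finset.range T, γ t) *
        ‖posPart (g ((∑ t ∈ Finset.range T, γ t)⁻¹
            • (∑ t ∈ Finset.range T, γ t • x (t + 1))))‖
        ≤ c₁ * L / 2 * ‖xstar - x 0‖ ^ 2
          + 12 * Mg ^ 2 / (c₁ ^ 2 * L ^ 2) * c₁ * L / 2 * (‖lamstar‖ + 1) ^ 2)
    ∧ (∀ T : ℕ, 1 ≤ T →
      c₁ * L * T / (c₁ * L + c₂ * Lg
          * (Real.sqrt (2 / (12 * Mg ^ 2 / (c₁ ^ 2 * L ^ 2))) * ‖x 0 - xstar‖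
            + (Real.sqrt 2 + 1) * ‖lamstar‖))
        ≤ ∑ t ∈ Finset.range T, γ t) := by
  -- ## basic scalar facts
  set H : ℝ := c₁ * L with hHdef
  set β' : ℝ := 12 * Mg ^ 2 / (c₁ ^ 2 * L ^ 2) with hβ'def
  set A : ℕ → Euc n := fun t => F (x t) + gradMul (Gg (x t)) (lam t) with hAdef
  have hH : 0 < H := by positivity
  have hβ' : 0 < β' := by rw [hβ'def]; positivity
  have hMgsq : Mg ^ 2 = β' * H ^ 2 / 12 := by
    rw [hβ'def, hHdef]; field_simp
  have hlam0norm : ‖lam 0‖ = 0 := by rw [hlam0, norm_zero]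
  have hsup_ge : ∀ t i, i ≤ t →
      ‖lam i‖ ≤ (Finset.range (t + 1)).sup' Finset.nonempty_range_add_one fun i => ‖lam i‖ :=
    fun t i hi => Finset.le_sup' (fun i => ‖lam i‖) (Finset.mem_range.mpr (Nat.lt_succ_of_le hi))
  have hsup0 : ∀ t, (0:ℝ) ≤ (Finset.range (t + 1)).sup' Finset.nonempty_range_add_one
      fun i => ‖lam i‖ := by
    intro t
    calc (0:ℝ) = ‖lam 0‖ := hlam0norm.symm
    _ ≤ _ := hsup_ge t 0 (Nat.zero_le _)
  have hη0 : η 0 = H := by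
    rw [hηt 0]
    simp [Finset.range_one, hlam0norm]
  have hηge : ∀ t, H ≤ η t := by
    intro t
    rw [hηt t]
    linarith only [mul_nonneg (mul_nonneg hc₂.le hLg) (hsup0 t)]
  have hηpos : ∀ t, 0 < η t := fun t => lt_of_lt_of_le hH (hηge t)
  have hγ : ∀ t, γ t = H / η t := by intro t; rw [hγt t, hη0]
  have hγpos : ∀ t, 0 < γ t := by
    intro t; rw [hγ t]; exact div_pos hH (hηpos t)
  have hγ1 : ∀ t, γ t ≤ 1 := by
    intro t; rw [hγ t, div_le_one (hηpos t)]; exact hηge t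
  have hγη : ∀ t, γ t * η t = H := by
    intro t
    rw [hγ t, div_mul_eq_mul_div, mul_div_assoc, div_self (ne_of_gt (hηpos t)), mul_one]
  have hγτ : ∀ t, γ t * τ t = β' * H := by
    intro t
    rw [hτt t, show γ t * (β' * η t) = β' * (γ t * η t) by ring, hγη t]
  have hγθ : ∀ t, γ (t + 1) * θ (t + 1) = γ t := by
    intro t
    have hne : γ (t + 1) ≠ 0 := ne_of_gt (hγpos (t + 1))
    rw [hθt t, mul_div_assoc', mul_comm, mul_div_assoc, div_self hne, mul_one]
  have hτpos : ∀ t, 0 < τ t := by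
    intro t; rw [hτt t]; exact mul_pos hβ' (hηpos t)
  have hlamsup : ∀ t, c₂ * Lg * ‖lam t‖ ≤ η t := by
    intro t
    rw [hηt t]
    have h2 := mul_le_mul_of_nonneg_left (hsup_ge t t le_rfl) (mul_nonneg hc₂.le hLg)
    linarith only [h2, hH]
  have hcoef : ∀ t, γ t * (L + Lg * ‖lam t‖) ≤ H / 3 := by
    intro t
    have hc' : 3 * c₁ + 3 * c₂ ≤ c₁ * c₂ := by
      rw [div_add' _ _ _ (ne_of_gt hc₂), div_le_div_iff₀ hc₂ three_pos] at hc
      linarith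
    have hL1 : c₁ * L ≤ η t := hHdef ▸ hηge t
    have hL2 : c₂ * (Lg * ‖lam t‖) ≤ η t := by
      linarith only [hlamsup t]
    have p1 : c₂ * (c₁ * L) ≤ c₂ * η t := mul_le_mul_of_nonneg_left hL1 hc₂.le
    have p2 : c₁ * (c₂ * (Lg * ‖lam t‖)) ≤ c₁ * η t := mul_le_mul_of_nonneg_left hL2 hc₁.le
    have p3 : (3 * c₁ + 3 * c₂) * η t ≤ (c₁ * c₂) * η t :=
      mul_le_mul_of_nonneg_right hc' (hηpos t).le
    have key : 3 * (L + Lg * ‖lam t‖) * (c₁ * c₂) ≤ η t * (c₁ * c₂) := by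
      linarith only [p1, p2, p3]
    have key2 : 3 * (L + Lg * ‖lam t‖) ≤ η t := by
      by_contra hcon
      push_neg at hcon
      have := mul_lt_mul_of_pos_right hcon (mul_pos hc₁ hc₂)
      linarith only [key, this]
    have key3 : γ t * (3 * (L + Lg * ‖lam t‖)) ≤ γ t * η t :=
      mul_le_mul_of_nonneg_left key2 (hγpos t).le
    rw [hγη t] at key3
    linarith
  have hyoungMg : ∀ a b : ℝ, Mg * a * b ≤ β' * H / 4 * a ^ 2 + H / 12 * b ^ 2 :=
    fun a b => young_aux hβ' hH hMgsq
  have hyoung3 : ∀ a b : ℝ, H / 3 * (a * b) ≤ H / 6 * a ^ 2 + H / 6 * b ^ 2 :=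
    fun a b => young_aux3 hH
  -- membership of iterates
  have hxX : ∀ t, x t ∈ X := by
    intro t
    cases t with
    | zero => exact hx0
    | succ t => exact hxS t
  have hlamN : ∀ t, ∀ j, 0 ≤ lam t j := by
    intro t
    cases t with
    | zero => intro j; rw [hlam0]; exact le_refl 0
    | succ t => exact hlamPos t
  -- bound on operator differences
  have hdbd : ∀ t, ‖A (t+1) - A t‖
      ≤ (L + Lg * ‖lam t‖) * ‖x (t+1) - x t‖ + Mg * ‖lam (t+1) - lam t‖ := by
    intro t
    have hid : A (t+1) - A t
        = (F (x (t+1)) - F (x t)) + gradMul (Gg (x (t+1))) (lam (t+1) - lam t)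
          + (gradMul (Gg (x (t+1))) (lam t) - gradMul (Gg (x t)) (lam t)) := by
      rw [hAdef, ← gradMul_sub]
      simp only
      abel
    rw [hid]
    have h1 : ‖F (x (t+1)) - F (x t)‖ ≤ L * ‖x (t+1) - x t‖ :=
      hFlip _ (hxX (t+1)) _ (hxX t)
    have h2 : ‖gradMul (Gg (x (t+1))) (lam (t+1) - lam t)‖ ≤ Mg * ‖lam (t+1) - lam t‖ :=
      hGgbd _ (hxX (t+1)) _
    have h3 : ‖gradMul (Gg (x (t+1))) (lam t) - gradMul (Gg (x t)) (lam t)‖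
        ≤ Lg * ‖lam t‖ * ‖x (t+1) - x t‖ := hGglip _ (hxX (t+1)) _ (hxX t) _
    have h4 := norm_add_le (F (x (t+1)) - F (x t) + gradMul (Gg (x (t+1))) (lam (t+1) - lam t))
      (gradMul (Gg (x (t+1))) (lam t) - gradMul (Gg (x t)) (lam t))
    have h5 := norm_add_le (F (x (t+1)) - F (x t)) (gradMul (Gg (x (t+1))) (lam (t+1) - lam t))
    linarith only [h1, h2, h3, h4, h5]
  have hebd : ∀ t, ‖g (x (t+1)) - g (x t)‖ ≤ Mg * ‖x (t+1) - x t‖ :=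
    fun t => hglip _ (hxX (t+1)) _ (hxX t)
  -- prox three-point inequalities
  have hproxP : ∀ t, ∀ y ∈ X,
      ⟪(1 + θ t) • A t - θ t • (F (xm t) + gradMul (Gg (xm t)) (lamm t)),
        x (t + 1) - y⟫_ℝ
      ≤ η t / 2 * (‖y - x t‖ ^ 2 - ‖y - x (t+1)‖ ^ 2 - ‖x (t+1) - x t‖ ^ 2) := by
    intro t
    exact prox_three_point hXconv (hηpos t) (hxS t) (hxMin t)
  have hproxD : ∀ t, ∀ l' : Euc m, (∀ j, 0 ≤ l' j) →
      ⟪-((1 + θ t) • g (x t) - θ t • g (xm t)), lam (t + 1) - l'⟫_ℝ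
      ≤ τ t / 2 * (‖l' - lam t‖ ^ 2 - ‖l' - lam (t+1)‖ ^ 2 - ‖lam (t+1) - lam t‖ ^ 2) := by
    intro t l' hl'
    exact prox_three_point (orthant_convex m) (hτpos t) (hlamPos t)
      (fun y hy => hlamMin t y hy) l' hl'
  have hA : ∀ s, F (x s) + gradMul (Gg (x s)) (lam s) = A s := fun s => rfl
  -- ## the per-iteration invariant (induction on t)
  have inv : ∀ t : ℕ, ∀ y ∈ X, ∀ l' : Euc m, (∀ j, 0 ≤ l' j) →
      (∑ i ∈ Finset.range (t + 1),
        γ i * (⟪A (i + 1), x (i + 1) - y⟫_ℝ - ⟪g (x (i + 1)), lam (i + 1) - l'⟫_ℝ))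
        - γ t * ⟪A (t + 1) - A t, x (t + 1) - y⟫_ℝ
        + γ t * ⟪g (x (t + 1)) - g (x t), lam (t + 1) - l'⟫_ℝ
        + H / 4 * ‖x (t + 1) - x t‖ ^ 2 + β' * H / 4 * ‖lam (t + 1) - lam t‖ ^ 2
      ≤ H / 2 * (‖y - x 0‖ ^ 2 - ‖y - x (t + 1)‖ ^ 2)
        + β' * H / 2 * (‖l'‖ ^ 2 - ‖l' - lam (t + 1)‖ ^ 2) := by
    intro t
    induction t with
    | zero =>
      intro y hy l' hl'
      have hγ0 : γ 0 = 1 := by rw [hγ 0, hη0, div_self (ne_of_gt hH)]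
      have hP := hproxP 0 y hy
      have hD := hproxD 0 l' hl'
      rw [hxm0, hlamm0, hθ0, hA 0] at hP
      rw [hxm0, hθ0] at hD
      have e1 : ⟪(1 + (1:ℝ)) • A 0 - (1:ℝ) • A 0, x 1 - y⟫_ℝ = ⟪A 0, x 1 - y⟫_ℝ := by
        rw [inner_sub_left, real_inner_smul_left, real_inner_smul_left]; ring
      have e2 : ⟪-((1 + (1:ℝ)) • g (x 0) - (1:ℝ) • g (x 0)), lam 1 - l'⟫_ℝ
          = -⟪g (x 0), lam 1 - l'⟫_ℝ := by
        rw [inner_neg_left, inner_sub_left, real_inner_smul_left, real_inner_smul_left]; ring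
      rw [e1, hη0] at hP
      rw [e2, hτt 0, hη0] at hD
      simp only [Nat.zero_add] at hP hD
      rw [hlam0] at hD
      simp only [sub_zero] at hD
      have i1 : ⟪A 1 - A 0, x 1 - y⟫_ℝ = ⟪A 1, x 1 - y⟫_ℝ - ⟪A 0, x 1 - y⟫_ℝ :=
        inner_sub_left _ _ _
      have i2 : ⟪g (x 1) - g (x 0), lam 1 - l'⟫_ℝ
          = ⟪g (x 1), lam 1 - l'⟫_ℝ - ⟪g (x 0), lam 1 - l'⟫_ℝ := inner_sub_left _ _ _
      simp only [zero_add, Finset.sum_range_one, hγ0, one_mul]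
      rw [hlam0, sub_zero]
      have n1 : 0 ≤ H * ‖x 1 - x 0‖ ^ 2 := by positivity
      have n2 : 0 ≤ β' * H * ‖lam 1 - lam 0‖ ^ 2 := by positivity
      rw [hlam0, sub_zero] at n2
      linarith only [hP, hD, i1, i2, n1, n2]
    | succ t ih =>
      intro y hy l' hl'
      have ihy := ih y hy l' hl'
      have hP := hproxP (t + 1) y hy
      have hD := hproxD (t + 1) l' hl'
      rw [hxm t, hlamm t, hA t] at hP
      rw [hxm t] at hD
      -- rescale prox inequalities by γ (t+1)
      have hP2 : γ (t + 1) * ⟪(1 + θ (t + 1)) • A (t + 1) - θ (t + 1) • A t,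
            x (t + 1 + 1) - y⟫_ℝ
          ≤ H / 2 * (‖y - x (t + 1)‖ ^ 2 - ‖y - x (t + 1 + 1)‖ ^ 2
              - ‖x (t + 1 + 1) - x (t + 1)‖ ^ 2) := by
        have h := mul_le_mul_of_nonneg_left hP (hγpos (t + 1)).le
        have h2 : γ (t + 1) * (η (t + 1) / 2 * (‖y - x (t + 1)‖ ^ 2
              - ‖y - x (t + 1 + 1)‖ ^ 2 - ‖x (t + 1 + 1) - x (t + 1)‖ ^ 2))
            = H / 2 * (‖y - x (t + 1)‖ ^ 2 - ‖y - x (t + 1 + 1)‖ ^ 2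
              - ‖x (t + 1 + 1) - x (t + 1)‖ ^ 2) := by
          linear_combination ((‖y - x (t + 1)‖ ^ 2 - ‖y - x (t + 1 + 1)‖ ^ 2
            - ‖x (t + 1 + 1) - x (t + 1)‖ ^ 2) / 2) * hγη (t + 1)
        linarith only [h, h2]
      have hD2 : γ (t + 1) * ⟪-((1 + θ (t + 1)) • g (x (t + 1)) - θ (t + 1) • g (x t)),
            lam (t + 1 + 1) - l'⟫_ℝ
          ≤ β' * H / 2 * (‖l' - lam (t + 1)‖ ^ 2 - ‖l' - lam (t + 1 + 1)‖ ^ 2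
              - ‖lam (t + 1 + 1) - lam (t + 1)‖ ^ 2) := by
        have h := mul_le_mul_of_nonneg_left hD (hγpos (t + 1)).le
        have h2 : γ (t + 1) * (τ (t + 1) / 2 * (‖l' - lam (t + 1)‖ ^ 2
              - ‖l' - lam (t + 1 + 1)‖ ^ 2 - ‖lam (t + 1 + 1) - lam (t + 1)‖ ^ 2))
            = β' * H / 2 * (‖l' - lam (t + 1)‖ ^ 2 - ‖l' - lam (t + 1 + 1)‖ ^ 2
              - ‖lam (t + 1 + 1) - lam (t + 1)‖ ^ 2) := by
          linear_combination ((‖l' - lam (t + 1)‖ ^ 2 - ‖l' - lam (t + 1 + 1)‖ ^ 2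
            - ‖lam (t + 1 + 1) - lam (t + 1)‖ ^ 2) / 2) * hγτ (t + 1)
        linarith only [h, h2]
      -- decomposition of the extrapolated operator
      have eq1 : γ (t + 1) * ⟪(1 + θ (t + 1)) • A (t + 1) - θ (t + 1) • A t,
            x (t + 1 + 1) - y⟫_ℝ
          = γ (t + 1) * ⟪A (t + 1 + 1), x (t + 1 + 1) - y⟫_ℝ
            - γ (t + 1) * ⟪A (t + 1 + 1) - A (t + 1), x (t + 1 + 1) - y⟫_ℝ
            + γ t * ⟪A (t + 1) - A t, x (t + 1 + 1) - y⟫_ℝ := by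
        rw [inner_sub_left, inner_sub_left, inner_sub_left, real_inner_smul_left,
          real_inner_smul_left]
        linear_combination (⟪A (t + 1), x (t + 1 + 1) - y⟫_ℝ
          - ⟪A t, x (t + 1 + 1) - y⟫_ℝ) * hγθ t
      have eq2 : γ (t + 1) * ⟪-((1 + θ (t + 1)) • g (x (t + 1)) - θ (t + 1) • g (x t)),
            lam (t + 1 + 1) - l'⟫_ℝ
          = -(γ (t + 1) * ⟪g (x (t + 1 + 1)), lam (t + 1 + 1) - l'⟫_ℝ)
            + γ (t + 1) * ⟪g (x (t + 1 + 1)) - g (x (t + 1)), lam (t + 1 + 1) - l'⟫_ℝ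
            - γ t * ⟪g (x (t + 1)) - g (x t), lam (t + 1 + 1) - l'⟫_ℝ := by
        rw [inner_neg_left, inner_sub_left, inner_sub_left, inner_sub_left,
          real_inner_smul_left, real_inner_smul_left]
        linear_combination (⟪g (x t), lam (t + 1 + 1) - l'⟫_ℝ
          - ⟪g (x (t + 1)), lam (t + 1 + 1) - l'⟫_ℝ) * hγθ t
      -- difference-of-test-point identities
      have j1 : ⟪A (t + 1) - A t, x (t + 1 + 1) - y⟫_ℝ
          = ⟪A (t + 1) - A t, x (t + 1) - y⟫_ℝ
            + ⟪A (t + 1) - A t, x (t + 1 + 1) - x (t + 1)⟫_ℝ := by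
        rw [← inner_add_right]; congr 1; abel
      have j2 : ⟪g (x (t + 1)) - g (x t), lam (t + 1 + 1) - l'⟫_ℝ
          = ⟪g (x (t + 1)) - g (x t), lam (t + 1) - l'⟫_ℝ
            + ⟪g (x (t + 1)) - g (x t), lam (t + 1 + 1) - lam (t + 1)⟫_ℝ := by
        rw [← inner_add_right]; congr 1; abel
      have j1' : γ t * ⟪A (t + 1) - A t, x (t + 1 + 1) - y⟫_ℝ
          = γ t * ⟪A (t + 1) - A t, x (t + 1) - y⟫_ℝ
            + γ t * ⟪A (t + 1) - A t, x (t + 1 + 1) - x (t + 1)⟫_ℝ := by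
        rw [j1]; ring
      have j2' : γ t * ⟪g (x (t + 1)) - g (x t), lam (t + 1 + 1) - l'⟫_ℝ
          = γ t * ⟪g (x (t + 1)) - g (x t), lam (t + 1) - l'⟫_ℝ
            + γ t * ⟪g (x (t + 1)) - g (x t), lam (t + 1 + 1) - lam (t + 1)⟫_ℝ := by
        rw [j2]; ring
      -- Young-type bounds on the error terms
      have hd := hdbd t
      have he := hebd t
      have habs1 : |⟪A (t + 1) - A t, x (t + 1 + 1) - x (t + 1)⟫_ℝ|
          ≤ ‖A (t + 1) - A t‖ * ‖x (t + 1 + 1) - x (t + 1)‖ := abs_real_inner_le_norm _ _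
      have habs2 : |⟪g (x (t + 1)) - g (x t), lam (t + 1 + 1) - lam (t + 1)⟫_ℝ|
          ≤ ‖g (x (t + 1)) - g (x t)‖ * ‖lam (t + 1 + 1) - lam (t + 1)‖ :=
        abs_real_inner_le_norm _ _
      have hb1 : γ t * |⟪A (t + 1) - A t, x (t + 1 + 1) - x (t + 1)⟫_ℝ|
          ≤ H / 6 * ‖x (t + 1) - x t‖ ^ 2 + (H / 6 + H / 12) * ‖x (t + 1 + 1) - x (t + 1)‖ ^ 2
            + β' * H / 4 * ‖lam (t + 1) - lam t‖ ^ 2 := by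
        have c2 : ‖A (t + 1) - A t‖ * ‖x (t + 1 + 1) - x (t + 1)‖
            ≤ ((L + Lg * ‖lam t‖) * ‖x (t + 1) - x t‖ + Mg * ‖lam (t + 1) - lam t‖)
              * ‖x (t + 1 + 1) - x (t + 1)‖ :=
          mul_le_mul_of_nonneg_right hd (norm_nonneg _)
        have c2' := mul_le_mul_of_nonneg_left (habs1.trans c2) (hγpos t).le
        have c3 : γ t * (((L + Lg * ‖lam t‖) * ‖x (t + 1) - x t‖
              + Mg * ‖lam (t + 1) - lam t‖) * ‖x (t + 1 + 1) - x (t + 1)‖)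
            = (γ t * (L + Lg * ‖lam t‖)) * (‖x (t + 1) - x t‖ * ‖x (t + 1 + 1) - x (t + 1)‖)
              + (γ t * Mg) * (‖lam (t + 1) - lam t‖ * ‖x (t + 1 + 1) - x (t + 1)‖) := by
          ring
        have c4 : (γ t * (L + Lg * ‖lam t‖))
              * (‖x (t + 1) - x t‖ * ‖x (t + 1 + 1) - x (t + 1)‖)
            ≤ H / 3 * (‖x (t + 1) - x t‖ * ‖x (t + 1 + 1) - x (t + 1)‖) :=
          mul_le_mul_of_nonneg_right (hcoef t) (by positivity)
        have c5 : (γ t * Mg) * (‖lam (t + 1) - lam t‖ * ‖x (t + 1 + 1) - x (t + 1)‖)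
            ≤ Mg * (‖lam (t + 1) - lam t‖ * ‖x (t + 1 + 1) - x (t + 1)‖) := by
          have h1 : γ t * Mg ≤ Mg := by
            have := mul_le_mul_of_nonneg_right (hγ1 t) hMgpos.le
            linarith only [this]
          exact mul_le_mul_of_nonneg_right h1 (by positivity)
        have c6 := hyoung3 ‖x (t + 1) - x t‖ ‖x (t + 1 + 1) - x (t + 1)‖
        have c7 := hyoungMg ‖lam (t + 1) - lam t‖ ‖x (t + 1 + 1) - x (t + 1)‖
        linarith only [c2', c3, c4, c5, c6, c7]
      have hb2 : γ t * |⟪g (x (t + 1)) - g (x t), lam (t + 1 + 1) - lam (t + 1)⟫_ℝ|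
          ≤ β' * H / 4 * ‖lam (t + 1 + 1) - lam (t + 1)‖ ^ 2
            + H / 12 * ‖x (t + 1) - x t‖ ^ 2 := by
        have c2 : ‖g (x (t + 1)) - g (x t)‖ * ‖lam (t + 1 + 1) - lam (t + 1)‖
            ≤ (Mg * ‖x (t + 1) - x t‖) * ‖lam (t + 1 + 1) - lam (t + 1)‖ :=
          mul_le_mul_of_nonneg_right he (norm_nonneg _)
        have c2' := mul_le_mul_of_nonneg_left (habs2.trans c2) (hγpos t).le
        have c5 : γ t * ((Mg * ‖x (t + 1) - x t‖) * ‖lam (t + 1 + 1) - lam (t + 1)‖)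
            ≤ (Mg * ‖x (t + 1) - x t‖) * ‖lam (t + 1 + 1) - lam (t + 1)‖ := by
          have hnn : 0 ≤ (Mg * ‖x (t + 1) - x t‖) * ‖lam (t + 1 + 1) - lam (t + 1)‖ := by
            positivity
          have := mul_le_mul_of_nonneg_right (hγ1 t) hnn
          linarith only [this]
        have c7 := hyoungMg ‖lam (t + 1 + 1) - lam (t + 1)‖ ‖x (t + 1) - x t‖
        linarith only [c2', c5, c7]
      -- absolute value bounds in both directions
      have sA := le_abs_self ⟪A (t + 1) - A t, x (t + 1 + 1) - x (t + 1)⟫_ℝ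
      have sA' := neg_abs_le ⟪A (t + 1) - A t, x (t + 1 + 1) - x (t + 1)⟫_ℝ
      have sE := le_abs_self ⟪g (x (t + 1)) - g (x t), lam (t + 1 + 1) - lam (t + 1)⟫_ℝ
      have sE' := neg_abs_le ⟪g (x (t + 1)) - g (x t), lam (t + 1 + 1) - lam (t + 1)⟫_ℝ
      have mA := mul_le_mul_of_nonneg_left sA (hγpos t).le
      have mA' := mul_le_mul_of_nonneg_left sA' (hγpos t).le
      have mE := mul_le_mul_of_nonneg_left sE (hγpos t).le
      have mE' := mul_le_mul_of_nonneg_left sE' (hγpos t).le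
      -- assemble
      rw [Finset.sum_range_succ]
      linarith only [ihy, hP2, hD2, eq1, eq2, j1', j2', hb1, hb2, mA, mA', mE, mE']
  -- ## master inequality
  have master : ∀ T : ℕ, ∀ y ∈ X, ∀ l' : Euc m, (∀ j, 0 ≤ l' j) →
      (∑ i ∈ Finset.range (T + 1),
        γ i * (⟪A (i + 1), x (i + 1) - y⟫_ℝ - ⟪g (x (i + 1)), lam (i + 1) - l'⟫_ℝ))
      ≤ H / 2 * ‖y - x 0‖ ^ 2 - H / 4 * ‖y - x (T + 1)‖ ^ 2
        + β' * H / 2 * ‖l'‖ ^ 2 - β' * H / 4 * ‖l' - lam (T + 1)‖ ^ 2 := by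
    intro T y hy l' hl'
    have hinv := inv T y hy l' hl'
    have hd := hdbd T
    have he := hebd T
    have habs1 : |⟪A (T + 1) - A T, x (T + 1) - y⟫_ℝ|
        ≤ ‖A (T + 1) - A T‖ * ‖x (T + 1) - y‖ := abs_real_inner_le_norm _ _
    have habs2 : |⟪g (x (T + 1)) - g (x T), lam (T + 1) - l'⟫_ℝ|
        ≤ ‖g (x (T + 1)) - g (x T)‖ * ‖lam (T + 1) - l'‖ := abs_real_inner_le_norm _ _
    have hb1 : γ T * |⟪A (T + 1) - A T, x (T + 1) - y⟫_ℝ|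
        ≤ H / 6 * ‖x (T + 1) - x T‖ ^ 2 + (H / 6 + H / 12) * ‖x (T + 1) - y‖ ^ 2
          + β' * H / 4 * ‖lam (T + 1) - lam T‖ ^ 2 := by
      have c2 : ‖A (T + 1) - A T‖ * ‖x (T + 1) - y‖
          ≤ ((L + Lg * ‖lam T‖) * ‖x (T + 1) - x T‖ + Mg * ‖lam (T + 1) - lam T‖)
            * ‖x (T + 1) - y‖ :=
        mul_le_mul_of_nonneg_right hd (norm_nonneg _)
      have c2' := mul_le_mul_of_nonneg_left (habs1.trans c2) (hγpos T).le
      have c3 : γ T * (((L + Lg * ‖lam T‖) * ‖x (T + 1) - x T‖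
            + Mg * ‖lam (T + 1) - lam T‖) * ‖x (T + 1) - y‖)
          = (γ T * (L + Lg * ‖lam T‖)) * (‖x (T + 1) - x T‖ * ‖x (T + 1) - y‖)
            + (γ T * Mg) * (‖lam (T + 1) - lam T‖ * ‖x (T + 1) - y‖) := by
        ring
      have c4 : (γ T * (L + Lg * ‖lam T‖)) * (‖x (T + 1) - x T‖ * ‖x (T + 1) - y‖)
          ≤ H / 3 * (‖x (T + 1) - x T‖ * ‖x (T + 1) - y‖) :=
        mul_le_mul_of_nonneg_right (hcoef T) (by positivity)
      have c5 : (γ T * Mg) * (‖lam (T + 1) - lam T‖ * ‖x (T + 1) - y‖)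
          ≤ Mg * (‖lam (T + 1) - lam T‖ * ‖x (T + 1) - y‖) := by
        have h1 : γ T * Mg ≤ Mg := by
          have := mul_le_mul_of_nonneg_right (hγ1 T) hMgpos.le
          linarith only [this]
        exact mul_le_mul_of_nonneg_right h1 (by positivity)
      have c6 := hyoung3 ‖x (T + 1) - x T‖ ‖x (T + 1) - y‖
      have c7 := hyoungMg ‖lam (T + 1) - lam T‖ ‖x (T + 1) - y‖
      linarith only [c2', c3, c4, c5, c6, c7]
    have hb2 : γ T * |⟪g (x (T + 1)) - g (x T), lam (T + 1) - l'⟫_ℝ|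
        ≤ β' * H / 4 * ‖lam (T + 1) - l'‖ ^ 2 + H / 12 * ‖x (T + 1) - x T‖ ^ 2 := by
      have c2 : ‖g (x (T + 1)) - g (x T)‖ * ‖lam (T + 1) - l'‖
          ≤ (Mg * ‖x (T + 1) - x T‖) * ‖lam (T + 1) - l'‖ :=
        mul_le_mul_of_nonneg_right he (norm_nonneg _)
      have c2' := mul_le_mul_of_nonneg_left (habs2.trans c2) (hγpos T).le
      have hnn : 0 ≤ (Mg * ‖x (T + 1) - x T‖) * ‖lam (T + 1) - l'‖ := by positivity
      have c5 := mul_le_mul_of_nonneg_right (hγ1 T) hnn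
      have c7 := hyoungMg ‖lam (T + 1) - l'‖ ‖x (T + 1) - x T‖
      linarith only [c2', c5, c7]
    have sA := le_abs_self ⟪A (T + 1) - A T, x (T + 1) - y⟫_ℝ
    have sE' := neg_abs_le ⟪g (x (T + 1)) - g (x T), lam (T + 1) - l'⟫_ℝ
    have mA := mul_le_mul_of_nonneg_left sA (hγpos T).le
    have mE' := mul_le_mul_of_nonneg_left sE' (hγpos T).le
    have nr1 : ‖x (T + 1) - y‖ ^ 2 = ‖y - x (T + 1)‖ ^ 2 := by rw [norm_sub_rev]
    have nr2 : ‖lam (T + 1) - l'‖ ^ 2 = ‖l' - lam (T + 1)‖ ^ 2 := by rw [norm_sub_rev]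
    rw [nr1] at hb1
    rw [nr2] at hb2
    linarith only [hinv, hb1, hb2, mA, mE']
  -- ## KKT / saddle-point consequences
  have hgstar : ∀ j, g xstar j ≤ 0 := by
    intro j
    have hpos : ∀ k, 0 ≤ (lamstar + EuclideanSpace.single j (1:ℝ)) k := by
      intro k
      have h : (lamstar + EuclideanSpace.single j (1:ℝ)) k
          = lamstar k + EuclideanSpace.single j (1:ℝ) k := rfl
      rw [h, EuclideanSpace.single_apply]
      have := hlamstar k
      split_ifs <;> linarith
    have hs := hsaddle₂ _ hpos
    rw [inner_add_left] at hs
    have hsingle : ⟪EuclideanSpace.single j (1:ℝ), g xstar⟫_ℝ = g xstar j := by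
      rw [euc_inner]
      simp [EuclideanSpace.single_apply]
    linarith only [hs, hsingle]
  have hcompl : ⟪lamstar, g xstar⟫_ℝ = 0 := by
    have h1 := hsaddle₂ 0 (fun j => le_of_eq rfl)
    rw [inner_zero_left] at h1
    have h2 := hsaddle₂ ((2:ℝ) • lamstar) (fun j => by
      have h : ((2:ℝ) • lamstar) j = 2 * lamstar j := rfl
      rw [h]; linarith [hlamstar j])
    rw [real_inner_smul_left] at h2
    linarith
  have hsadd1' : ∀ u ∈ X, 0 ≤ ⟪F xstar, u - xstar⟫_ℝ + ⟪lamstar, g u⟫_ℝ := by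
    intro u hu
    have h := hsaddle₁ u hu
    rw [inner_sub_right]
    linarith [hcompl, h]
  have hnonpos : ∀ (μ : Euc m), (∀ j, 0 ≤ μ j) → ∀ (v : Euc m), (∀ j, v j ≤ 0) →
      ⟪μ, v⟫_ℝ ≤ 0 := by
    intro μ hμ v hv
    rw [euc_inner]
    apply Finset.sum_nonpos
    intro j _
    exact mul_nonpos_of_nonneg_of_nonpos (hμ j) (hv j)
  -- ## generic lower bound on the gap terms
  have key_term : ∀ t, ∀ z ∈ X, ∀ l' : Euc m,
      ⟪F z, x (t + 1) - z⟫_ℝ + ⟪l', g (x (t + 1))⟫_ℝ - ⟪lam (t + 1), g z⟫_ℝ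
      ≤ ⟪A (t + 1), x (t + 1) - z⟫_ℝ - ⟪g (x (t + 1)), lam (t + 1) - l'⟫_ℝ := by
    intro t z hz l'
    have h1 : 0 ≤ ⟪F (x (t + 1)) - F z, x (t + 1) - z⟫_ℝ := hFmono _ (hxS t) _ hz
    have h1' : ⟪F (x (t + 1)) - F z, x (t + 1) - z⟫_ℝ
        = ⟪F (x (t + 1)), x (t + 1) - z⟫_ℝ - ⟪F z, x (t + 1) - z⟫_ℝ := inner_sub_left _ _ _
    have h2 : ⟪lam (t + 1), g (x (t + 1)) - g z⟫_ℝ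
        ≤ ⟪gradMul (Gg (x (t + 1))) (lam (t + 1)), x (t + 1) - z⟫_ℝ := by
      rw [gradMul_inner, euc_inner]
      apply Finset.sum_le_sum
      intro j _
      have hj := hgconv (x (t + 1)) (hxS t) z hz j
      have hneg : ⟪Gg (x (t + 1)) j, z - x (t + 1)⟫_ℝ
          = -⟪Gg (x (t + 1)) j, x (t + 1) - z⟫_ℝ := by
        rw [← inner_neg_right]; congr 1; abel
      rw [hneg] at hj
      have hcomp : (g (x (t + 1)) - g z) j = g (x (t + 1)) j - g z j := rfl
      rw [hcomp]
      exact mul_le_mul_of_nonneg_left (by linarith) (hlamPos t j)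
    have hAexp : ⟪A (t + 1), x (t + 1) - z⟫_ℝ
        = ⟪F (x (t + 1)), x (t + 1) - z⟫_ℝ
          + ⟪gradMul (Gg (x (t + 1))) (lam (t + 1)), x (t + 1) - z⟫_ℝ := by
      rw [← hA (t + 1), inner_add_left]
    have hsub : ⟪g (x (t + 1)), lam (t + 1) - l'⟫_ℝ
        = ⟪g (x (t + 1)), lam (t + 1)⟫_ℝ - ⟪g (x (t + 1)), l'⟫_ℝ := inner_sub_right _ _ _
    have hc1 : ⟪lam (t + 1), g (x (t + 1)) - g z⟫_ℝ
        = ⟪g (x (t + 1)), lam (t + 1)⟫_ℝ - ⟪lam (t + 1), g z⟫_ℝ := by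
      rw [inner_sub_right, real_inner_comm]
    have hc2 : ⟪l', g (x (t + 1))⟫_ℝ = ⟪g (x (t + 1)), l'⟫_ℝ := real_inner_comm _ _
    linarith only [h1, h1', h2, hAexp, hsub, hc1, hc2]
  -- ## conclusion (i): boundedness of the multipliers
  have hterm_star : ∀ t, 0 ≤ ⟪A (t + 1), x (t + 1) - xstar⟫_ℝ
      - ⟪g (x (t + 1)), lam (t + 1) - lamstar⟫_ℝ := by
    intro t
    have hk := key_term t xstar hxstar lamstar
    have h1 := hsadd1' (x (t + 1)) (hxS t)
    have h2 := hnonpos (lam (t + 1)) (hlamPos t) (g xstar) hgstar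
    linarith only [hk, h1, h2]
  have concl1 : ∀ t : ℕ, ‖lam (t + 1)‖
      ≤ Real.sqrt (2 / β') * ‖x 0 - xstar‖ + (Real.sqrt 2 + 1) * ‖lamstar‖ := by
    intro t
    have hm := master t xstar hxstar lamstar hlamstar
    have hsnn : 0 ≤ ∑ i ∈ Finset.range (t + 1),
        γ i * (⟪A (i + 1), x (i + 1) - xstar⟫_ℝ - ⟪g (x (i + 1)), lam (i + 1) - lamstar⟫_ℝ) :=
      Finset.sum_nonneg fun i _ => mul_nonneg (hγpos i).le (hterm_star i)
    have hyn : 0 ≤ H / 4 * ‖xstar - x (t + 1)‖ ^ 2 := by positivity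
    have h4 : β' * H / 4 * ‖lamstar - lam (t + 1)‖ ^ 2
        ≤ H / 2 * ‖xstar - x 0‖ ^ 2 + β' * H / 2 * ‖lamstar‖ ^ 2 := by
      linarith only [hm, hsnn, hyn]
    have e0 : ‖xstar - x 0‖ = ‖x 0 - xstar‖ := norm_sub_rev _ _
    rw [e0] at h4
    have h5 : ‖lamstar - lam (t + 1)‖ ^ 2
        ≤ 2 / β' * ‖x 0 - xstar‖ ^ 2 + 2 * ‖lamstar‖ ^ 2 := by
      have e : β' * H / 4 * (2 / β' * ‖x 0 - xstar‖ ^ 2 + 2 * ‖lamstar‖ ^ 2)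
          = H / 2 * ‖x 0 - xstar‖ ^ 2 + β' * H / 2 * ‖lamstar‖ ^ 2 := by
        field_simp
        ring
      have hpos4 : (0:ℝ) < β' * H / 4 := by positivity
      have := (mul_le_mul_iff_right₀ hpos4).mp (by linarith only [h4, e] :
        β' * H / 4 * ‖lamstar - lam (t + 1)‖ ^ 2
        ≤ β' * H / 4 * (2 / β' * ‖x 0 - xstar‖ ^ 2 + 2 * ‖lamstar‖ ^ 2))
      exact this
    set D0 : ℝ := Real.sqrt (2 / β') * ‖x 0 - xstar‖ + Real.sqrt 2 * ‖lamstar‖ with hD0def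
    have hD0 : 0 ≤ D0 := by positivity
    have e1 : Real.sqrt (2 / β') ^ 2 = 2 / β' := Real.sq_sqrt (by positivity)
    have e2 : Real.sqrt 2 ^ 2 = 2 := Real.sq_sqrt (by norm_num)
    have hsq : ‖lamstar - lam (t + 1)‖ ^ 2 ≤ D0 ^ 2 := by
      have hcross : 0 ≤ (Real.sqrt (2 / β') * ‖x 0 - xstar‖) * (Real.sqrt 2 * ‖lamstar‖) := by
        positivity
      rw [hD0def]
      nlinarith [h5, e1, e2, hcross]
    have hle : ‖lamstar - lam (t + 1)‖ ≤ D0 := by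
      have := Real.sqrt_le_sqrt hsq
      rwa [Real.sqrt_sq (norm_nonneg _), Real.sqrt_sq hD0] at this
    have htri : ‖lam (t + 1)‖ ≤ ‖lamstar‖ + ‖lamstar - lam (t + 1)‖ := by
      have h : lam (t + 1) = lamstar - (lamstar - lam (t + 1)) := by abel
      calc ‖lam (t + 1)‖ = ‖lamstar - (lamstar - lam (t + 1))‖ := by rw [← h]
      _ ≤ ‖lamstar‖ + ‖lamstar - lam (t + 1)‖ := norm_sub_le _ _
    rw [hD0def] at hle
    linarith only [htri, hle]
  -- ## conclusion (ii)
  have concl2 : ∀ T : ℕ, 1 ≤ T → ∀ z ∈ X, (∀ j, g z j ≤ 0) →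
      (∑ t ∈ Finset.range T, γ t) *
        ⟪F z, (∑ t ∈ Finset.range T, γ t)⁻¹ • (∑ t ∈ Finset.range T, γ t • x (t + 1))
          - z⟫_ℝ
        ≤ H / 2 * ‖z - x 0‖ ^ 2 := by
    intro T hT z hz hgz
    obtain ⟨T', rfl⟩ : ∃ T', T = T' + 1 := ⟨T - 1, by omega⟩
    set Γ : ℝ := ∑ t ∈ Finset.range (T' + 1), γ t with hΓdef
    have hΓpos : 0 < Γ := Finset.sum_pos (fun i _ => hγpos i) Finset.nonempty_range_add_one
    have hm := master T' z hz 0 (fun j => le_of_eq rfl)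
    have hlb : ∀ i, ⟪F z, x (i + 1) - z⟫_ℝ
        ≤ ⟪A (i + 1), x (i + 1) - z⟫_ℝ - ⟪g (x (i + 1)), lam (i + 1) - 0⟫_ℝ := by
      intro i
      have hk := key_term i z hz 0
      have h2 := hnonpos (lam (i + 1)) (hlamPos i) (g z) hgz
      have h0 : ⟪(0 : Euc m), g (x (i + 1))⟫_ℝ = 0 := inner_zero_left _
      linarith only [hk, h2, h0]
    have hsum_lb : ∑ i ∈ Finset.range (T' + 1), γ i * ⟪F z, x (i + 1) - z⟫_ℝ
        ≤ ∑ i ∈ Finset.range (T' + 1),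
            γ i * (⟪A (i + 1), x (i + 1) - z⟫_ℝ - ⟪g (x (i + 1)), lam (i + 1) - 0⟫_ℝ) :=
      Finset.sum_le_sum fun i _ => mul_le_mul_of_nonneg_left (hlb i) (hγpos i).le
    have e2 : ⟪F z, ∑ t ∈ Finset.range (T' + 1), γ t • x (t + 1)⟫_ℝ
        = ∑ i ∈ Finset.range (T' + 1), γ i * ⟪F z, x (i + 1)⟫_ℝ := by
      rw [inner_sum]
      exact Finset.sum_congr rfl fun i _ => real_inner_smul_right _ _ _
    have e1 : ∑ i ∈ Finset.range (T' + 1), γ i * ⟪F z, x (i + 1) - z⟫_ℝ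
        = (∑ i ∈ Finset.range (T' + 1), γ i * ⟪F z, x (i + 1)⟫_ℝ) - Γ * ⟪F z, z⟫_ℝ := by
      rw [hΓdef, Finset.sum_mul, ← Finset.sum_sub_distrib]
      exact Finset.sum_congr rfl fun i _ => by rw [inner_sub_right]; ring
    have hbar : Γ * ⟪F z, Γ⁻¹ • (∑ t ∈ Finset.range (T' + 1), γ t • x (t + 1)) - z⟫_ℝ
        = ∑ i ∈ Finset.range (T' + 1), γ i * ⟪F z, x (i + 1) - z⟫_ℝ := by
      rw [inner_sub_right, real_inner_smul_right, e2, e1, mul_sub,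
        ← mul_assoc, mul_inv_cancel₀ (ne_of_gt hΓpos), one_mul]
    have hz0 : ‖(0 : Euc m)‖ ^ 2 = 0 := by simp
    rw [hz0] at hm
    have hn1 : 0 ≤ H / 4 * ‖z - x (T' + 1)‖ ^ 2 := by positivity
    have hn2 : 0 ≤ β' * H / 4 * ‖(0 : Euc m) - lam (T' + 1)‖ ^ 2 := by positivity
    linarith only [hm, hsum_lb, hbar, hn1, hn2]
  -- ## conclusion (iii)
  have concl3 : ∀ T : ℕ, 1 ≤ T →
      (∑ t ∈ Finset.range T, γ t) *
        ‖posPart (g ((∑ t ∈ Finset.range T, γ t)⁻¹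
            • (∑ t ∈ Finset.range T, γ t • x (t + 1))))‖
        ≤ H / 2 * ‖xstar - x 0‖ ^ 2 + β' * H / 2 * (‖lamstar‖ + 1) ^ 2 := by
    intro T hT
    obtain ⟨T', rfl⟩ : ∃ T', T = T' + 1 := ⟨T - 1, by omega⟩
    set Γ : ℝ := ∑ t ∈ Finset.range (T' + 1), γ t with hΓdef
    have hΓpos : 0 < Γ := Finset.sum_pos (fun i _ => hγpos i) Finset.nonempty_range_add_one
    set xb : Euc n := Γ⁻¹ • (∑ t ∈ Finset.range (T' + 1), γ t • x (t + 1)) with hxbdef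
    have hxbX : xb ∈ X := by
      have h1 : ∑ i ∈ Finset.range (T' + 1), (γ i / Γ) • x (i + 1) ∈ X :=
        hXconv.sum_mem (fun i _ => div_nonneg (hγpos i).le hΓpos.le)
          (by rw [← Finset.sum_div, ← hΓdef, div_self (ne_of_gt hΓpos)])
          (fun i _ => hxS i)
      have h2 : xb = ∑ i ∈ Finset.range (T' + 1), (γ i / Γ) • x (i + 1) := by
        rw [hxbdef, Finset.smul_sum]
        exact Finset.sum_congr rfl fun i _ => by
          rw [smul_smul, div_eq_mul_inv, mul_comm]
      rw [h2]; exact h1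
    have hsum_smul : ∑ t ∈ Finset.range (T' + 1), γ t • x (t + 1) = Γ • xb := by
      rw [hxbdef, smul_smul, mul_inv_cancel₀ (ne_of_gt hΓpos), one_smul]
    have hjensen : ∀ j, Γ * g xb j ≤ ∑ i ∈ Finset.range (T' + 1), γ i * g (x (i + 1)) j := by
      intro j
      have h2 : ∑ i ∈ Finset.range (T' + 1),
            γ i * (g xb j + ⟪Gg xb j, x (i + 1) - xb⟫_ℝ)
          ≤ ∑ i ∈ Finset.range (T' + 1), γ i * g (x (i + 1)) j :=
        Finset.sum_le_sum fun i _ => mul_le_mul_of_nonneg_left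
          (hgconv xb hxbX (x (i + 1)) (hxS i) j) (hγpos i).le
      have h4 : ∑ i ∈ Finset.range (T' + 1), γ i • (x (i + 1) - xb) = 0 := by
        simp_rw [smul_sub]
        rw [Finset.sum_sub_distrib, hsum_smul, ← Finset.sum_smul, ← hΓdef, sub_self]
      have h3 : ∑ i ∈ Finset.range (T' + 1),
            γ i * (g xb j + ⟪Gg xb j, x (i + 1) - xb⟫_ℝ)
          = Γ * g xb j := by
        simp_rw [mul_add]
        rw [Finset.sum_add_distrib, ← Finset.sum_mul, ← hΓdef]
        have h5 : ∑ i ∈ Finset.range (T' + 1), γ i * ⟪Gg xb j, x (i + 1) - xb⟫_ℝ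
            = ⟪Gg xb j, ∑ i ∈ Finset.range (T' + 1), γ i • (x (i + 1) - xb)⟫_ℝ := by
          rw [inner_sum]
          exact Finset.sum_congr rfl fun i _ => (real_inner_smul_right _ _ _).symm
        rw [h5, h4, inner_zero_right, add_zero]
      linarith only [h2, h3]
    set N : ℝ := ‖posPart (g xb)‖ with hNdef
    have eR : 0 ≤ H / 2 * ‖xstar - x 0‖ ^ 2 + β' * H / 2 * (‖lamstar‖ + 1) ^ 2 := by
      positivity
    by_cases hN : N = 0
    · rw [hN, mul_zero]; exact eR
    · have hNpos : 0 < N := lt_of_le_of_ne (norm_nonneg _) (Ne.symm hN)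
      set lh : Euc m := ((‖lamstar‖ + 1) / N) • posPart (g xb) with hlhdef
      have hlhpos : ∀ j, 0 ≤ lh j := by
        intro j
        have h : lh j = ((‖lamstar‖ + 1) / N) * max (g xb j) 0 := rfl
        rw [h]
        have : (0:ℝ) ≤ (‖lamstar‖ + 1) / N := by positivity
        exact mul_nonneg this (le_max_right _ _)
      have hm := master T' xstar hxstar lh hlhpos
      have hlhnorm : ‖lh‖ = ‖lamstar‖ + 1 := by
        rw [hlhdef, norm_smul, Real.norm_eq_abs, abs_of_nonneg (by positivity), ← hNdef]
        field_simp
      have hlb : ∀ i, ⟪F xstar, x (i + 1) - xstar⟫_ℝ + ⟪lh, g (x (i + 1))⟫_ℝ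
          ≤ ⟪A (i + 1), x (i + 1) - xstar⟫_ℝ - ⟪g (x (i + 1)), lam (i + 1) - lh⟫_ℝ := by
        intro i
        have hk := key_term i xstar hxstar lh
        have h2 := hnonpos (lam (i + 1)) (hlamPos i) (g xstar) hgstar
        linarith only [hk, h2]
      have hsum_lb : ∑ i ∈ Finset.range (T' + 1),
            γ i * (⟪F xstar, x (i + 1) - xstar⟫_ℝ + ⟪lh, g (x (i + 1))⟫_ℝ)
          ≤ ∑ i ∈ Finset.range (T' + 1),
            γ i * (⟪A (i + 1), x (i + 1) - xstar⟫_ℝ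
              - ⟪g (x (i + 1)), lam (i + 1) - lh⟫_ℝ) :=
        Finset.sum_le_sum fun i _ => mul_le_mul_of_nonneg_left (hlb i) (hγpos i).le
      have hsplit : ∑ i ∈ Finset.range (T' + 1),
            γ i * (⟪F xstar, x (i + 1) - xstar⟫_ℝ + ⟪lh, g (x (i + 1))⟫_ℝ)
          = (∑ i ∈ Finset.range (T' + 1), γ i * ⟪F xstar, x (i + 1) - xstar⟫_ℝ)
            + ∑ i ∈ Finset.range (T' + 1), γ i * ⟪lh, g (x (i + 1))⟫_ℝ := by
        simp_rw [mul_add]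
        rw [Finset.sum_add_distrib]
      have hb2 : ∑ i ∈ Finset.range (T' + 1), γ i * ⟪F xstar, x (i + 1) - xstar⟫_ℝ
          = (∑ i ∈ Finset.range (T' + 1), γ i * ⟪F xstar, x (i + 1)⟫_ℝ)
            - Γ * ⟪F xstar, xstar⟫_ℝ := by
        rw [hΓdef, Finset.sum_mul, ← Finset.sum_sub_distrib]
        exact Finset.sum_congr rfl fun i _ => by rw [inner_sub_right]; ring
      have hb1 : Γ * ⟪F xstar, xb - xstar⟫_ℝ
          = (∑ i ∈ Finset.range (T' + 1), γ i * ⟪F xstar, x (i + 1)⟫_ℝ)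
            - Γ * ⟪F xstar, xstar⟫_ℝ := by
        rw [inner_sub_right, mul_sub]
        have h6 : Γ * ⟪F xstar, xb⟫_ℝ = ⟪F xstar, Γ • xb⟫_ℝ :=
          (real_inner_smul_right _ _ _).symm
        rw [h6, ← hsum_smul, inner_sum]
        congr 1
        exact Finset.sum_congr rfl fun i _ => real_inner_smul_right _ _ _
      have hL2 : Γ * ⟪lh, g xb⟫_ℝ
          ≤ ∑ i ∈ Finset.range (T' + 1), γ i * ⟪lh, g (x (i + 1))⟫_ℝ := by
        rw [euc_inner, Finset.mul_sum]
        have h2 : ∑ j, Γ * (lh j * g xb j) ≤ ∑ j, lh j * (∑ i ∈ Finset.range (T' + 1),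
            γ i * g (x (i + 1)) j) := by
          apply Finset.sum_le_sum
          intro j _
          have := mul_le_mul_of_nonneg_left (hjensen j) (hlhpos j)
          linarith only [this]
        refine h2.trans (le_of_eq ?_)
        simp_rw [Finset.mul_sum]
        rw [Finset.sum_comm]
        apply Finset.sum_congr rfl
        intro i _
        rw [euc_inner, Finset.mul_sum]
        exact Finset.sum_congr rfl fun j _ => by ring
      have hval : ⟪lh, g xb⟫_ℝ = (‖lamstar‖ + 1) * N := by
        rw [hlhdef, real_inner_smul_left, inner_posPart_self, ← hNdef]
        field_simp
      have hval' : Γ * ⟪lh, g xb⟫_ℝ = Γ * ((‖lamstar‖ + 1) * N) := by rw [hval]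
      have hstar_le : ⟪lamstar, g xb⟫_ℝ ≤ ‖lamstar‖ * N := by
        have h1 : ⟪lamstar, g xb⟫_ℝ ≤ ⟪lamstar, posPart (g xb)⟫_ℝ := by
          rw [euc_inner, euc_inner]
          apply Finset.sum_le_sum
          intro j _
          exact mul_le_mul_of_nonneg_left (le_max_left _ _) (hlamstar j)
        have h2 : ⟪lamstar, posPart (g xb)⟫_ℝ ≤ ‖lamstar‖ * ‖posPart (g xb)‖ :=
          real_inner_le_norm _ _
        rw [← hNdef] at h2
        linarith only [h1, h2]
      have hstar_le' := mul_le_mul_of_nonneg_left hstar_le hΓpos.le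
      have hsadd := hsadd1' xb hxbX
      have hsadd' := mul_le_mul_of_nonneg_left hsadd hΓpos.le
      have hlh2 : ‖lh‖ ^ 2 = (‖lamstar‖ + 1) ^ 2 := by rw [hlhnorm]
      rw [hlh2] at hm
      have hn1 : 0 ≤ H / 4 * ‖xstar - x (T' + 1)‖ ^ 2 := by positivity
      have hn2 : 0 ≤ β' * H / 4 * ‖lh - lam (T' + 1)‖ ^ 2 := by positivity
      rw [mul_zero] at hsadd'
      linarith only [hm, hsum_lb, hsplit, hb1, hb2, hL2, hval', hstar_le', hsadd',
        hn1, hn2]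
  -- ## conclusion (iv)
  have concl4 : ∀ T : ℕ, 1 ≤ T →
      H * T / (H + c₂ * Lg * (Real.sqrt (2 / β') * ‖x 0 - xstar‖
          + (Real.sqrt 2 + 1) * ‖lamstar‖))
        ≤ ∑ t ∈ Finset.range T, γ t := by
    intro T hT
    set B : ℝ := Real.sqrt (2 / β') * ‖x 0 - xstar‖ + (Real.sqrt 2 + 1) * ‖lamstar‖
      with hBdef
    have hB0 : 0 ≤ B := by
      rw [hBdef]
      have h1 : (0:ℝ) ≤ Real.sqrt 2 + 1 := by positivity
      positivity
    have hlamB : ∀ i, ‖lam i‖ ≤ B := by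
      intro i
      cases i with
      | zero => rw [hlam0norm]; exact hB0
      | succ i => exact concl1 i
    have hηB : ∀ t, η t ≤ H + c₂ * Lg * B := by
      intro t
      rw [hηt t]
      have h1 : (Finset.range (t + 1)).sup' Finset.nonempty_range_add_one (fun i => ‖lam i‖)
          ≤ B := Finset.sup'_le _ _ fun i _ => hlamB i
      have h2 := mul_le_mul_of_nonneg_left h1 (mul_nonneg hc₂.le hLg)
      linarith only [h2]
    have hγB : ∀ t, H / (H + c₂ * Lg * B) ≤ γ t := by
      intro t
      rw [hγ t]
      exact div_le_div_of_nonneg_left hH.le (hηpos t) (hηB t)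
    have hsum : (T : ℝ) * (H / (H + c₂ * Lg * B)) ≤ ∑ t ∈ Finset.range T, γ t := by
      calc (T : ℝ) * (H / (H + c₂ * Lg * B))
          = ∑ _t ∈ Finset.range T, H / (H + c₂ * Lg * B) := by
            rw [Finset.sum_const, Finset.card_range, nsmul_eq_mul]
      _ ≤ ∑ t ∈ Finset.range T, γ t := Finset.sum_le_sum fun i _ => hγB i
    have he : H * (T : ℝ) / (H + c₂ * Lg * B) = (T : ℝ) * (H / (H + c₂ * Lg * B)) := by
      ring
    rw [he]
    exact hsum
  refine ⟨concl1, concl2, ?_, concl4⟩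
  intro T hT
  have h := concl3 T hT
  have e : β' * c₁ * L / 2 * (‖lamstar‖ + 1) ^ 2 = β' * H / 2 * (‖lamstar‖ + 1) ^ 2 := by
    rw [hHdef]; ring
  linarith only [h, e]


end
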